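/- For the 2×2 Painlevé 4 Lax matrix L̃_{P4}(ξ), the characteristic polynomial satisfies det(Y·I₂ - L̃_{P4}(ξ)) = Y² - R₁(ξ)Y + R₂(ξ) - ((Q-X₁)/(ξ-X₁))·(P² - R₁(Q)P + R₂(Q)), and in particular the point (Q,P) lies on this spectral curve only after including the apparent-singularity correction term; evaluating the curve expression at (ξ,Y)=(Q,P) gives the value (P² - R₁(Q)P + R₂(Q))·(1 - (Q-X₁)/(Q-X₁)) = 0. -/

import Mathlib

namespace Gl2Paper

/-- `R₁(ξ)` for the Painlevé 4 system. -/
noncomputable def R1 (s12 s22 s11 s21 sx1 sx2 X1 : ℂ) (x : ℂ) : ℂ :=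
  (sx1 + sx2) / (x - X1) - (s12 + s22) * x - s11 - s21

/-- `R₂(ξ)` for the Painlevé 4 system. -/
noncomputable def R2 (s12 s22 s11 s21 s10 s20 sx1 sx2 X1 : ℂ) (x : ℂ) : ℂ :=
  sx1 * sx2 / (x - X1)^2 + s12 * s22 * x^2 + (s22 * s11 + s12 * s21) * x
    + s10 * s22 + s11 * s21 + s12 * s20

/-- The `𝔤𝔩₂` Painlevé 4 Lax matrix `L̃_{P4}(ξ)` in the geometric gauge,
in terms of the Darboux coordinates `(Q,P)`. -/
noncomputable def LP4 (s12 s22 s11 s21 s10 sx1 sx2 X1 Q P : ℂ) (x : ℂ) :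
    Matrix (Fin 2) (Fin 2) ℂ :=
  !![(Q - X1) * (s12*Q + P + s11) / (x - X1) - s12*x - s11,
     1 + (X1 - Q) / (x - X1);
     (1 / ((Q - X1) * (x - X1)))
         * (s12*Q^2 + (s11 + P - X1*s12)*Q - (P + s11)*X1 - sx1)
         * (s12*Q^2 + (s11 + P - X1*s12)*Q - (P + s11)*X1 - sx2)
       + (s12 - s22)*(Q - X1)*P + (s12 - s22)*s12*Q^2
       - (s12 - s22)*(s12*X1 - s11)*Q - (s11*X1 - s10)*(s12 - s22),
     (-s12*Q^2 + (s12*X1 - P - s11)*Q + (s11 + P)*X1 + sx1 + sx2) / (x - X1)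
       - s22*x - s21]

set_option maxHeartbeats 1000000 in
private lemma key_charpoly (s12 s22 s11 s21 s10 sx1 sx2 X1 Q P x Y : ℂ)
    (hx' : x - X1 ≠ 0) (hQ' : Q - X1 ≠ 0) :
    (Y - ((Q - X1) * (s12*Q + P + s11) / (x - X1) - s12*x - s11))
      * (Y - ((-s12*Q^2 + (s12*X1 - P - s11)*Q + (s11 + P)*X1 + sx1 + sx2) / (x - X1) - s22*x - s21))
    - (1 + (X1 - Q) / (x - X1))
      * ((1 / ((Q - X1) * (x - X1)))
         * (s12*Q^2 + (s11 + P - X1*s12)*Q - (P + s11)*X1 - sx1)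
         * (s12*Q^2 + (s11 + P - X1*s12)*Q - (P + s11)*X1 - sx2)
       + (s12 - s22)*(Q - X1)*P + (s12 - s22)*s12*Q^2
       - (s12 - s22)*(s12*X1 - s11)*Q - (s11*X1 - s10)*(s12 - s22))
    = Y^2 - ((sx1 + sx2) / (x - X1) - (s12 + s22) * x - s11 - s21) * Y
      + (sx1 * sx2 / (x - X1)^2 + s12 * s22 * x^2 + (s22 * s11 + s12 * s21) * x
          + s10 * s22 + s11 * s21 + s12 * (-s10 - sx1 - sx2))
      - ((Q - X1) / (x - X1))
          * (P^2 - ((sx1 + sx2) / (Q - X1) - (s12 + s22) * Q - s11 - s21) * P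
              + (sx1 * sx2 / (Q - X1)^2 + s12 * s22 * Q^2 + (s22 * s11 + s12 * s21) * Q
                  + s10 * s22 + s11 * s21 + s12 * (-s10 - sx1 - sx2))) := by
  obtain ⟨u, hu, rfl⟩ : ∃ u, u ≠ 0 ∧ x = X1 + u := ⟨x - X1, hx', by ring⟩
  obtain ⟨w, hw, rfl⟩ : ∃ w, w ≠ 0 ∧ Q = X1 + w := ⟨Q - X1, hQ', by ring⟩
  simp only [show X1 + u - X1 = u from by ring, show X1 + w - X1 = w from by ring]
  field_simp
  ring

/-- The characteristic polynomial of the Painlevé 4 Lax matrix: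
`det(Y·I₂ - L̃_{P4}(ξ)) = Y² - R₁(ξ)Y + R₂(ξ) - ((Q-X₁)/(ξ-X₁))(P² - R₁(Q)P + R₂(Q))`;
moreover evaluating the curve's apparent-singularity correction at `(ξ,Y) = (Q,P)`
gives `(P² - R₁(Q)P + R₂(Q))·(1 - (Q-X₁)/(Q-X₁)) = 0`. -/
theorem charpoly_of_LP4 (s12 s22 s11 s21 s10 s20 sx1 sx2 X1 Q P : ℂ)
    (hs : s12 ≠ s22) (hmono : s10 + s20 + sx1 + sx2 = 0)
    (hQ : Q ≠ X1) (x Y : ℂ) (hx : x ≠ X1) :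
    Matrix.det (Y • (1 : Matrix (Fin 2) (Fin 2) ℂ)
        - LP4 s12 s22 s11 s21 s10 sx1 sx2 X1 Q P x)
      = Y^2 - R1 s12 s22 s11 s21 sx1 sx2 X1 x * Y
        + R2 s12 s22 s11 s21 s10 s20 sx1 sx2 X1 x
        - ((Q - X1) / (x - X1))
            * (P^2 - R1 s12 s22 s11 s21 sx1 sx2 X1 Q * P
                + R2 s12 s22 s11 s21 s10 s20 sx1 sx2 X1 Q)
    ∧ (P^2 - R1 s12 s22 s11 s21 sx1 sx2 X1 Q * P
        + R2 s12 s22 s11 s21 s10 s20 sx1 sx2 X1 Q) * (1 - (Q - X1)/(Q - X1)) = 0 := by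
  have hQ' : Q - X1 ≠ 0 := sub_ne_zero.mpr hQ
  have hx' : x - X1 ≠ 0 := sub_ne_zero.mpr hx
  have hs20 : s20 = -s10 - sx1 - sx2 := by linear_combination hmono
  constructor
  · subst hs20
    simp only [Matrix.det_fin_two, LP4, Matrix.smul_apply, Matrix.one_apply,
      Matrix.cons_val', Matrix.cons_val_zero, Matrix.cons_val_one, Matrix.head_cons,
      Matrix.head_fin_const, Matrix.sub_apply, Matrix.of_apply, Matrix.empty_val',
      Matrix.cons_val_fin_one, R1, R2]
    simp only [if_true, if_pos rfl, if_neg (by decide : (0:Fin 2) ≠ 1), if_neg (by decide : (1:Fin 2) ≠ 0),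
      smul_eq_mul, mul_one, mul_zero]
    have h := key_charpoly s12 s22 s11 s21 s10 sx1 sx2 X1 Q P x Y hx' hQ'
    linear_combination h
  · rw [div_self hQ']
    simp


end Gl2Paper
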